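/- Let p be a positive odd integer and q an even nonzero integer with gcd(p,q) = 1. Set ε_i = (−1)^⌊iq/p⌋ and τ = −∑_{i=1}^{p−1} i·ε_i. Then 2q·τ ≡ 1 (mod p), i.e., τ is congruent modulo p to the inverse of 2q in ℤ/pℤ. -/

import Mathlib

open Finset

/-- ε_i = (−1)^⌊iq/p⌋ -/
def eps (p q i : ℤ) : ℤ := ((-1 : ℤˣ) ^ ⌊(i * q : ℚ) / (p : ℚ)⌋ : ℤˣ)

/-- d(i) = ∑_{k=1}^{i} ε_k -/
noncomputable def dd (p q i : ℤ) : ℤ := ∑ k ∈ Finset.Icc 1 i, eps p q k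

lemma emod_mul_emod_left (a b n : ℤ) : (a % n) * b % n = a * b % n := by
  rw [Int.mul_emod, Int.emod_emod_of_dvd _ dvd_rfl, ← Int.mul_emod]

lemma eps_eq (p q i : ℤ) (hp : 0 < p) (hpodd : Odd p) (hqeven : Even q) :
    eps p q i = if Even (i * q % p) then 1 else -1 := by
  have hfloor : ⌊(i * q : ℚ) / (p : ℚ)⌋ = i * q / p := by
    have h1 : ((p : ℚ)) = ((p.toNat : ℕ) : ℚ) := by
      exact_mod_cast (Int.toNat_of_nonneg hp.le).symm
    rw [show ((i : ℚ) * q) = (((i*q : ℤ) : ℚ)) by push_cast; ring, h1,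
      Rat.floor_intCast_div_natCast, Int.toNat_of_nonneg hp.le]
  have hp2 : p % 2 = 1 := Int.odd_iff.mp hpodd
  have hpar : Even (i * q / p) ↔ Even (i * q % p) := by
    have hkey : i * q = p * (i * q / p) + i * q % p := (Int.mul_ediv_add_emod _ _).symm
    have h2 : (i * q) % 2 = 0 := Int.even_iff.mp (hqeven.mul_left i)
    have h3 : (p * (i * q / p)) % 2 = (i * q / p) % 2 := by
      rw [Int.mul_emod, hp2, one_mul, Int.emod_emod_of_dvd _ dvd_rfl]
    rw [Int.even_iff, Int.even_iff]
    set d := i * q / p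
    set r := i * q % p
    set pd := p * d
    set iq := i * q
    omega
  unfold eps
  rw [hfloor]
  rcases Int.even_or_odd (i * q / p) with h | h
  · rw [h.neg_one_zpow, if_pos (hpar.mp h)]; rfl
  · obtain ⟨k, hk⟩ := h
    rw [hk, zpow_add, zpow_one, Even.neg_one_zpow ⟨k, two_mul k⟩, one_mul]
    rw [if_neg (by
      rw [← hpar, hk, Int.even_iff]
      omega)]
    rfl

lemma T_sum (m : ℕ) :
    ∑ r ∈ Finset.Icc (1 : ℤ) (2 * m), r * (if Even r then 1 else -1) = m := by
  induction m with
  | zero => simp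
  | succ n ih =>
    have hset : Finset.Icc (1 : ℤ) (2 * (n + 1 : ℕ)) =
        insert (2 * (n : ℤ) + 2) (insert (2 * (n : ℤ) + 1) (Finset.Icc (1 : ℤ) (2 * n))) := by
      ext a
      simp only [Finset.mem_Icc, Finset.mem_insert]
      push_cast
      omega
    rw [hset, Finset.sum_insert, Finset.sum_insert, ih]
    · have h1 : Even (2 * (n : ℤ) + 2) := ⟨n + 1, by ring⟩
      have h2 : ¬ Even (2 * (n : ℤ) + 1) := by
        rw [Int.even_iff]; omega
      rw [if_pos h1, if_neg h2]
      push_cast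
      ring
    · simp only [Finset.mem_Icc]; omega
    · simp only [Finset.mem_Icc, Finset.mem_insert]
      push_cast
      omega

theorem stmt7 (p q : ℤ) (hp : 0 < p) (hpodd : Odd p) (hqeven : Even q)
    (hq0 : q ≠ 0) (hcop : IsCoprime p q) :
    2 * q * (-∑ i ∈ Finset.Icc (1 : ℤ) (p - 1), i * eps p q i) ≡ 1 [ZMOD p] := by
  obtain ⟨u, v, huv⟩ := hcop
  have hcopv : IsCoprime p v := ⟨u, q, by linarith [huv, mul_comm q v]⟩
  have hqv : ∀ a : ℤ, (a * q * v) % p = a % p := by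
    intro a
    have hvq : v * q = 1 - u * p := by linarith
    have h1 : a * q * v = a + (-(a * u)) * p := by
      have : a * q * v = a * (v * q) := by ring
      rw [this, hvq]; ring
    rw [h1, Int.add_mul_emod_self_right]
  set S1 := ∑ i ∈ Finset.Icc (1 : ℤ) (p - 1), i * eps p q i with hS1
  have hmem : ∀ (w : ℤ), IsCoprime p w → ∀ i ∈ Finset.Icc (1 : ℤ) (p - 1),
      i * w % p ∈ Finset.Icc (1 : ℤ) (p - 1) := by
    intro w hw i hi
    simp only [Finset.mem_Icc] at hi ⊢
    have h0 : 0 ≤ i * w % p := Int.emod_nonneg _ hp.ne'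
    have h1 : i * w % p < p := Int.emod_lt_of_pos _ hp
    have hne : i * w % p ≠ 0 := by
      intro h
      have hdvd : p ∣ i * w := Int.dvd_of_emod_eq_zero h
      have : p ∣ i := hw.dvd_of_dvd_mul_right hdvd
      have := Int.le_of_dvd (by omega) this
      omega
    omega
  have hbij : ∑ i ∈ Finset.Icc (1 : ℤ) (p - 1), (i * q % p) * eps p q i
      = ∑ r ∈ Finset.Icc (1 : ℤ) (p - 1), r * (if Even r then 1 else -1) := by
    refine Finset.sum_bij' (fun i _ => i * q % p) (fun r _ => r * v % p)
      (fun i hi => hmem q ⟨u, v, huv⟩ i hi) (fun r hr => hmem v hcopv r hr) ?_ ?_ ?_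
    · intro i hi
      simp only [Finset.mem_Icc] at hi
      show i * q % p * v % p = i
      rw [emod_mul_emod_left, hqv, Int.emod_eq_of_lt (by omega) (by omega)]
    · intro r hr
      simp only [Finset.mem_Icc] at hr
      show r * v % p * q % p = r
      rw [emod_mul_emod_left, show r * v * q = r * q * v by ring, hqv,
        Int.emod_eq_of_lt (by omega) (by omega)]
    · intro i _
      rw [eps_eq p q i hp hpodd hqeven]
  have hT : ∑ r ∈ Finset.Icc (1 : ℤ) (p - 1), r * (if Even r then 1 else -1)
      = (p - 1) / 2 := by
    obtain ⟨k, hk⟩ := hpodd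
    have : p - 1 = 2 * (k.toNat : ℤ) := by omega
    rw [this, T_sum]
    omega
  have hcong : (∑ i ∈ Finset.Icc (1 : ℤ) (p - 1), (i * q % p) * eps p q i) % p
      = (q * S1) % p := by
    rw [hS1, Finset.mul_sum]
    rw [Finset.sum_int_mod, Finset.sum_int_mod (f := fun i => q * (i * eps p q i))]
    congr 1
    apply Finset.sum_congr rfl
    intro i _
    rw [emod_mul_emod_left, show i * q * eps p q i = q * (i * eps p q i) by ring]
  have hmod : q * S1 ≡ (p - 1) / 2 [ZMOD p] := by
    show (q * S1) % p = ((p - 1) / 2) % p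
    rw [← hcong, hbij, hT]
  have h2 : 2 * ((p - 1) / 2) = p - 1 := by
    obtain ⟨k, hk⟩ := hpodd
    omega
  have h3 : 2 * q * (-S1) = -(2 * (q * S1)) := by ring
  rw [h3]
  calc -(2 * (q * S1)) ≡ -(2 * ((p - 1) / 2)) [ZMOD p] := ((hmod.mul_left 2).neg)
    _ = 1 - p := by omega
    _ ≡ 1 [ZMOD p] := Int.ModEq.symm (Int.modEq_iff_dvd.mpr ⟨-1, by ring⟩)
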